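/- For any n ≥ 3, any t ∈ ℝ, and any i ≠ j, the transfer fidelity in the complete graph satisfies |[exp(-i·t·H(K_n))]_{ij}| ≤ 2/n; in particular, the complete graph K_n does not admit perfect state transfer between distinct vertices. -/

import Mathlib

/-- For `n ≥ 3`, any time `t` and distinct vertices `i ≠ j`, the transfer
fidelity in the complete graph satisfies `|[exp(-itH(K_n))]_{ij}| ≤ 2/n`; in particular,
`K_n` admits no perfect state transfer between distinct vertices. -/
theorem complete_graph_no_pst (n : ℕ) (hn : 3 ≤ n) (t : ℝ)
    (H : Matrix (Fin n) (Fin n) ℂ)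
    (hH : H = ((n * (n - 5) / 2 : ℂ)) • (1 : Matrix (Fin n) (Fin n) ℂ)
        + 2 • (Matrix.of fun _ _ : Fin n => (1 : ℂ)))
    (i j : Fin n) (hij : i ≠ j) :
    ‖NormedSpace.exp ((-(Complex.I * t)) • H) i j‖ ≤ 2 / n ∧
    ‖NormedSpace.exp ((-(Complex.I * t)) • H) i j‖ ≠ 1 := by
  have hn0 : (n : ℂ) ≠ 0 := Nat.cast_ne_zero.mpr (by omega)
  set K : Matrix (Fin n) (Fin n) ℂ := Matrix.of (fun _ _ => (1 : ℂ)) with hK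
  set a : ℂ := -(Complex.I * t) * (n * (n - 5) / 2) with ha
  set b : ℂ := -(Complex.I * t) * 2 with hb
  set c : ℂ := a + b * n with hc
  have hM : (-(Complex.I * (t : ℂ))) • H = a • (1 : Matrix (Fin n) (Fin n) ℂ) + b • K := by
    subst hH
    ext x y
    simp [Matrix.add_apply, Matrix.smul_apply, hK, ha, hb]
    ring
  have hKK : K * K = (n : ℂ) • K := by
    ext x y
    simp [Matrix.mul_apply, hK]
  have hpow : ∀ k : ℕ, (a • (1 : Matrix (Fin n) (Fin n) ℂ) + b • K) ^ k
      = a ^ k • (1 : Matrix (Fin n) (Fin n) ℂ) + ((c ^ k - a ^ k) / n) • K := by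
    intro k
    induction k with
    | zero => simp
    | succ k ih =>
      rw [pow_succ, ih]
      have hs : a ^ k * b + ((c ^ k - a ^ k) / n) * a + ((c ^ k - a ^ k) / n) * (b * n)
          = (c ^ (k + 1) - a ^ (k + 1)) / n := by
        rw [hc]
        field_simp
        ring
      have expand : (a ^ k • (1 : Matrix (Fin n) (Fin n) ℂ) + ((c ^ k - a ^ k) / n) • K)
          * (a • 1 + b • K)
          = (a ^ k * a) • (1 : Matrix (Fin n) (Fin n) ℂ)
            + (a ^ k * b + ((c ^ k - a ^ k) / n) * a + ((c ^ k - a ^ k) / n) * (b * n)) • K := by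
        simp only [add_mul, mul_add, Matrix.smul_mul, Matrix.mul_smul, one_mul, mul_one, hKK,
          smul_smul, add_smul]
        module
      rw [expand, hs, ← pow_succ]
  have hentry : ∀ k : ℕ, ((a • (1 : Matrix (Fin n) (Fin n) ℂ) + b • K) ^ k) i j
      = (c ^ k - a ^ k) / n := by
    intro k
    rw [hpow k]
    simp [Matrix.add_apply, Matrix.smul_apply, Matrix.one_apply_ne hij, hK]
  set M := a • (1 : Matrix (Fin n) (Fin n) ℂ) + b • K with hMdef
  letI : SeminormedRing (Matrix (Fin n) (Fin n) ℂ) := Matrix.linftyOpSemiNormedRing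
  letI : NormedRing (Matrix (Fin n) (Fin n) ℂ) := Matrix.linftyOpNormedRing
  letI : NormedAlgebra ℂ (Matrix (Fin n) (Fin n) ℂ) := Matrix.linftyOpNormedAlgebra
  have hsumM : Summable (fun k : ℕ => ((k.factorial : ℂ))⁻¹ • M ^ k) :=
    NormedSpace.expSeries_summable' M
  let L0 : Matrix (Fin n) (Fin n) ℂ →ₗ[ℂ] ℂ :=
    { toFun := fun A => A i j, map_add' := fun _ _ => rfl, map_smul' := fun _ _ => rfl }
  let L : Matrix (Fin n) (Fin n) ℂ →L[ℂ] ℂ := LinearMap.toContinuousLinearMap L0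
  have hL : ∀ A : Matrix (Fin n) (Fin n) ℂ, L A = A i j := fun _ => rfl
  have hexp : NormedSpace.exp ((-(Complex.I * (t : ℂ))) • H) i j
      = (Complex.exp c - Complex.exp a) / n := by
    rw [hM, NormedSpace.exp_eq_tsum (𝕂 := ℂ)]
    show L (∑' k : ℕ, ((k.factorial : ℂ))⁻¹ • M ^ k) = _
    rw [L.map_tsum hsumM]
    have h1 : ∀ k : ℕ, L (((k.factorial : ℂ))⁻¹ • M ^ k)
        = ((k.factorial : ℂ))⁻¹ • (c ^ k) / n - ((k.factorial : ℂ))⁻¹ • (a ^ k) / n := by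
      intro k
      rw [map_smul, hL, hentry k]
      simp only [smul_eq_mul]
      ring
    rw [tsum_congr h1]
    have hsc : Summable (fun k : ℕ => ((k.factorial : ℂ))⁻¹ • (c ^ k) / n) :=
      (NormedSpace.expSeries_summable' c).div_const n
    have hsa : Summable (fun k : ℕ => ((k.factorial : ℂ))⁻¹ • (a ^ k) / n) :=
      (NormedSpace.expSeries_summable' a).div_const n
    rw [Summable.tsum_sub hsc hsa]
    have hc' : ∑' k : ℕ, ((k.factorial : ℂ))⁻¹ • (c ^ k) / n = Complex.exp c / n := by
      rw [tsum_div_const]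
      congr 1
      rw [Complex.exp_eq_exp_ℂ, NormedSpace.exp_eq_tsum (𝕂 := ℂ)]
    have ha' : ∑' k : ℕ, ((k.factorial : ℂ))⁻¹ • (a ^ k) / n = Complex.exp a / n := by
      rw [tsum_div_const]
      congr 1
      rw [Complex.exp_eq_exp_ℂ, NormedSpace.exp_eq_tsum (𝕂 := ℂ)]
    rw [hc', ha']
    ring
  have habsa : ‖Complex.exp a‖ = 1 := by
    have h : a = ((-(t * ((n : ℝ) * ((n : ℝ) - 5) / 2))) : ℝ) * Complex.I := by
      rw [ha]; push_cast; ring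
    rw [h, Complex.norm_exp_ofReal_mul_I]
  have habsc : ‖Complex.exp c‖ = 1 := by
    have h : c = ((-(t * ((n : ℝ) * ((n : ℝ) - 5) / 2 + 2 * n))) : ℝ) * Complex.I := by
      rw [hc, ha, hb]; push_cast; ring
    rw [h, Complex.norm_exp_ofReal_mul_I]
  have hnR : (0 : ℝ) < n := by positivity
  have hbound : ‖NormedSpace.exp ((-(Complex.I * (t : ℂ))) • H) i j‖ ≤ 2 / n := by
    rw [hexp, norm_div, Complex.norm_natCast]
    have h2 : ‖Complex.exp c - Complex.exp a‖ ≤ 2 := by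
      calc ‖Complex.exp c - Complex.exp a‖
          ≤ ‖Complex.exp c‖ + ‖Complex.exp a‖ :=
            norm_sub_le _ _
        _ = 2 := by rw [habsa, habsc]; norm_num
    gcongr
  refine ⟨hbound, fun h1 => ?_⟩
  have h2 : (1 : ℝ) ≤ 2 / n := h1 ▸ hbound
  have h3 : (2 : ℝ) / n ≤ 2 / 3 := by
    apply div_le_div_of_nonneg_left (by norm_num) (by norm_num)
    exact_mod_cast hn
  linarith
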